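/- arXiv:1610.00228 — 8 statements merged into one kernel-verified Lean document; each statement's English description precedes it below -/
import Mathlib

section
/- For the ERK(2,2) family with parameter α ∈ [1/2, 1], each of the polynomials P₀(x,y,v) = 1 − (1 − 1/(2α))y − v/(2α) + yv/2, P₁(x,y,v) = (1 − 1/(2α))y + v/(2α) − xv/2 − yv/2, and P₂(x,y,v) = xv/2 is non-negative for all (x,y,v) ∈ [0,1]³. -/
theorem erk22_mid_alpha_nonneg (α : ℝ) (hα1 : 1/2 ≤ α) (hα2 : α ≤ 1)
    (x y v : ℝ) (hx : x ∈ Set.Icc (0:ℝ) 1) (hy : y ∈ Set.Icc (0:ℝ) 1)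
    (hv : v ∈ Set.Icc (0:ℝ) 1) :
    0 ≤ 1 - (1 - 1/(2*α))*y - v/(2*α) + y*v/2 ∧
    0 ≤ (1 - 1/(2*α))*y + v/(2*α) - x*v/2 - y*v/2 ∧
    0 ≤ x*v/2 := by
  obtain ⟨hx0, hx1⟩ := hx
  obtain ⟨hy0, hy1⟩ := hy
  obtain ⟨hv0, hv1⟩ := hv
  have hαpos : (0:ℝ) < 2*α := by linarith
  have hb1 : (1:ℝ)/2 ≤ 1/(2*α) := by
    rw [div_le_div_iff₀ (by norm_num) hαpos]; linarith
  have hb2 : 1/(2*α) ≤ 1 := by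
    rw [div_le_one hαpos]; linarith
  set b := 1/(2*α) with hb
  have hvb : v/(2*α) = b * v := by rw [hb]; ring
  rw [hvb]
  refine ⟨?_, ?_, by positivity⟩
  · nlinarith [mul_nonneg (sub_nonneg.2 hb2) (sub_nonneg.2 hy1),
      mul_nonneg (by linarith : (0:ℝ) ≤ b) (sub_nonneg.2 hv1), mul_nonneg hy0 hv0]
  · nlinarith [mul_nonneg (sub_nonneg.2 hb2) (mul_nonneg hy0 (sub_nonneg.2 hv1)),
      mul_nonneg (sub_nonneg.2 hb2) (mul_nonneg hv0 (sub_nonneg.2 hx1)),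
      mul_nonneg (by linarith : (0:ℝ) ≤ b - 1/2) (mul_nonneg hv0 (by linarith : (0:ℝ) ≤ 2-x-y))]
end

section
/- For any α ∈ [1/2, 1] and any ε > 0, the polynomial P₁(x,y,v) = (1 − 1/(2α))y + v/(2α) − xv/2 − yv/2 satisfies 2·P₁(1, 1+ε, 1+ε) = −ε(1+ε) < 0; hence the positivity step-size coefficient of ERK(2,2) methods with α ∈ [1/2, 1] is exactly 1. -/
theorem erk22_mid_alpha_sharp (α ε : ℝ) (hα1 : 1/2 ≤ α) (hα2 : α ≤ 1) (hε : 0 < ε) :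
    2 * ((1 - 1/(2*α))*(1+ε) + (1+ε)/(2*α) - 1*(1+ε)/2 - (1+ε)*(1+ε)/2)
      = -ε*(1+ε) ∧ -ε*(1+ε) < 0 := by
  have hα : (2*α) ≠ 0 := by nlinarith
  constructor
  · field_simp
    ring
  · nlinarith
end

section
/- For the ERK(2,2) family with parameter α > 1, each of the polynomials P₀(x,y,v) = 1 − (1 − 1/(2α))y − v/(2α) + yv/2, P₁(x,y,v) = (1 − 1/(2α))y + v/(2α) − xv/2 − yv/2, and P₂(x,y,v) = xv/2 is non-negative for all (x,y,v) ∈ [0, 1/α]³. -/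
theorem erk22_large_alpha_nonneg (α : ℝ) (hα : 1 < α)
    (x y v : ℝ) (hx : x ∈ Set.Icc (0:ℝ) (1/α)) (hy : y ∈ Set.Icc (0:ℝ) (1/α))
    (hv : v ∈ Set.Icc (0:ℝ) (1/α)) :
    0 ≤ 1 - (1 - 1/(2*α))*y - v/(2*α) + y*v/2 ∧
    0 ≤ (1 - 1/(2*α))*y + v/(2*α) - x*v/2 - y*v/2 ∧
    0 ≤ x*v/2 := by
  obtain ⟨hx0, hx1⟩ := hx
  obtain ⟨hy0, hy1⟩ := hy
  obtain ⟨hv0, hv1⟩ := hv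
  have hα0 : (0:ℝ) < α := by linarith
  have h1 : 1/α < 1 := by rw [div_lt_one hα0]; exact hα
  have e1 : 1/(2*α) = (1/α)/2 := by ring
  have e2 : v/(2*α) = v*(1/α)/2 := by ring
  have hy1' : y ≤ 1 := hy1.trans h1.le
  have hv1' : v ≤ 1 := hv1.trans h1.le
  have hx1' : x ≤ 1 := hx1.trans h1.le
  rw [e1, e2]
  refine ⟨?_, ?_, by positivity⟩
  · nlinarith [mul_nonneg (sub_nonneg.mpr hy1') (sub_nonneg.mpr hv1'),
      mul_nonneg hv0 (sub_nonneg.mpr h1.le), mul_nonneg hy0 hv0,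
      mul_nonneg hy0 (sub_nonneg.mpr h1.le)]
  · nlinarith [mul_nonneg hy0 (sub_nonneg.mpr hv1), mul_nonneg hv0 (sub_nonneg.mpr hx1),
      mul_nonneg hy0 hv0, mul_nonneg hy0 (sub_nonneg.mpr h1.le)]
end

section
/- For every α ∈ [1/2, 3/4] and all (x,y,z,u,v,w) ∈ [0,1]⁶, the quantity 12·P₀ = 12αv − 2vwz + 3vw − 8αvz + 6vz − 9v − 12αw + 8αwz − 3wz − 3z + 12 is non-negative. -/
theorem erk33_caseII_P0_nonneg (α : ℝ) (hα1 : 1/2 ≤ α) (hα2 : α ≤ 3/4)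
    (x y z u v w : ℝ)
    (hx : x ∈ Set.Icc (0:ℝ) 1) (hy : y ∈ Set.Icc (0:ℝ) 1) (hz : z ∈ Set.Icc (0:ℝ) 1)
    (hu : u ∈ Set.Icc (0:ℝ) 1) (hv : v ∈ Set.Icc (0:ℝ) 1) (hw : w ∈ Set.Icc (0:ℝ) 1) :
    0 ≤ 12*α*v - 2*v*w*z + 3*v*w - 8*α*v*z + 6*v*z - 9*v - 12*α*w + 8*α*w*z
        - 3*w*z - 3*z + 12 := by
  obtain ⟨hz0, hz1⟩ := hz
  obtain ⟨hv0, hv1⟩ := hv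
  obtain ⟨hw0, hw1⟩ := hw
  nlinarith [mul_nonneg hv0 hw0, mul_nonneg hv0 hz0, mul_nonneg hw0 hz0,
    mul_nonneg (mul_nonneg hv0 hw0) hz0, mul_nonneg (sub_nonneg.2 hz1) (sub_nonneg.2 hv1),
    mul_nonneg (sub_nonneg.2 hz1) (sub_nonneg.2 hw1),
    mul_nonneg (sub_nonneg.2 hv1) (sub_nonneg.2 hw1),
    mul_nonneg (sub_nonneg.2 hα2) hw0, mul_nonneg (sub_nonneg.2 hα2) hv0,
    mul_nonneg (sub_nonneg.2 hα1) hv0, mul_nonneg (sub_nonneg.2 hα1) hw0,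
    mul_nonneg (mul_nonneg (sub_nonneg.2 hα2) hw0) hz0,
    mul_nonneg (mul_nonneg (sub_nonneg.2 hα1) hw0) hz0,
    mul_nonneg (mul_nonneg (sub_nonneg.2 hα1) hv0) (sub_nonneg.2 hz1),
    mul_nonneg (mul_nonneg (sub_nonneg.2 hα2) hv0) hz0,
    mul_nonneg (mul_nonneg hv0 (sub_nonneg.2 hw1)) (sub_nonneg.2 hz1),
    mul_nonneg (mul_nonneg (sub_nonneg.2 hv1) hw0) hz0,
    mul_nonneg (mul_nonneg (sub_nonneg.2 hv1) (sub_nonneg.2 hw1)) hz0]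
end

section
/- For every α ∈ [1/2, 3/4] and all (x,y,z,u,v,w) ∈ [0,1]⁶, the quantity 12·P₁ = [−12αv + 8αvy − 6vy + 8αvz − 6vz + 9v + 3z] + w·[12α + 2uy − 3u + 2vy + 2vz − 3v − 8αy + 3y − 8αz + 3z] is non-negative; in fact each of the two bracketed expressions is separately non-negative. -/
theorem erk33_caseII_P1_nonneg (α : ℝ) (hα1 : 1/2 ≤ α) (hα2 : α ≤ 3/4)
    (x y z u v w : ℝ)
    (hx : x ∈ Set.Icc (0:ℝ) 1) (hy : y ∈ Set.Icc (0:ℝ) 1) (hz : z ∈ Set.Icc (0:ℝ) 1)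
    (hu : u ∈ Set.Icc (0:ℝ) 1) (hv : v ∈ Set.Icc (0:ℝ) 1) (hw : w ∈ Set.Icc (0:ℝ) 1) :
    0 ≤ -12*α*v + 8*α*v*y - 6*v*y + 8*α*v*z - 6*v*z + 9*v + 3*z ∧
    0 ≤ 12*α + 2*u*y - 3*u + 2*v*y + 2*v*z - 3*v - 8*α*y + 3*y - 8*α*z + 3*z ∧
    0 ≤ (-12*α*v + 8*α*v*y - 6*v*y + 8*α*v*z - 6*v*z + 9*v + 3*z) +
        w*(12*α + 2*u*y - 3*u + 2*v*y + 2*v*z - 3*v - 8*α*y + 3*y - 8*α*z + 3*z) := by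
  obtain ⟨hx0, hx1⟩ := hx
  obtain ⟨hy0, hy1⟩ := hy
  obtain ⟨hz0, hz1⟩ := hz
  obtain ⟨hu0, hu1⟩ := hu
  obtain ⟨hv0, hv1⟩ := hv
  obtain ⟨hw0, hw1⟩ := hw
  have h1 : 0 ≤ -12*α*v + 8*α*v*y - 6*v*y + 8*α*v*z - 6*v*z + 9*v + 3*z := by
    nlinarith [mul_nonneg hv0 (sub_nonneg.2 hy1), mul_nonneg hz0 (sub_nonneg.2 hv1),
      mul_nonneg hv0 hz0, mul_nonneg (sub_nonneg.2 hα1) hv0,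
      mul_nonneg (sub_nonneg.2 hα2) hv0, mul_nonneg (sub_nonneg.2 hα1) hz0,
      mul_nonneg (mul_nonneg hv0 (sub_nonneg.2 hy1)) (sub_nonneg.2 hα2),
      mul_nonneg (mul_nonneg hz0 (sub_nonneg.2 hv1)) (sub_nonneg.2 hα1)]
  have h2 : 0 ≤ 12*α + 2*u*y - 3*u + 2*v*y + 2*v*z - 3*v - 8*α*y + 3*y - 8*α*z + 3*z := by
    nlinarith [mul_nonneg hu0 hy0, mul_nonneg hv0 hy0, mul_nonneg hv0 hz0,
      mul_nonneg (sub_nonneg.2 hu1) (sub_nonneg.2 hy1),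
      mul_nonneg (sub_nonneg.2 hv1) (sub_nonneg.2 hy1),
      mul_nonneg (sub_nonneg.2 hv1) (sub_nonneg.2 hz1),
      mul_nonneg (sub_nonneg.2 hα1) hy0, mul_nonneg (sub_nonneg.2 hα1) hz0,
      mul_nonneg (sub_nonneg.2 hα2) (sub_nonneg.2 hy1),
      mul_nonneg (sub_nonneg.2 hα2) (sub_nonneg.2 hz1)]
  exact ⟨h1, h2, by nlinarith [mul_nonneg hw0 h2]⟩
end

section
/- For every α ∈ [1/2, 3/4] and all (x,y,z,u,v,w) ∈ [0,1]⁶, the quantity 12·P₂ = (3 − 2x)uw − 2uwy − 2vwy − 8αvy + 6vy + 8αwy − 3wy is non-negative. -/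
theorem erk33_caseII_P2_nonneg (α : ℝ) (hα1 : 1/2 ≤ α) (hα2 : α ≤ 3/4)
    (x y z u v w : ℝ)
    (hx : x ∈ Set.Icc (0:ℝ) 1) (hy : y ∈ Set.Icc (0:ℝ) 1) (hz : z ∈ Set.Icc (0:ℝ) 1)
    (hu : u ∈ Set.Icc (0:ℝ) 1) (hv : v ∈ Set.Icc (0:ℝ) 1) (hw : w ∈ Set.Icc (0:ℝ) 1) :
    0 ≤ (3 - 2*x)*u*w - 2*u*w*y - 2*v*w*y - 8*α*v*y + 6*v*y + 8*α*w*y - 3*w*y := by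
  obtain ⟨hx0, hx1⟩ := hx
  obtain ⟨hy0, hy1⟩ := hy
  obtain ⟨hu0, hu1⟩ := hu
  obtain ⟨hv0, hv1⟩ := hv
  obtain ⟨hw0, hw1⟩ := hw
  set B : ℝ := -2*u*w - 2*v*w + (6 - 8*α)*v + (8*α - 3)*w with hB
  rcases le_or_gt 0 B with hBpos | hBneg
  · nlinarith [mul_nonneg hu0 hw0, mul_nonneg hy0 hBpos,
      mul_nonneg (mul_nonneg hu0 hw0) (sub_nonneg.2 hx1)]
  · have h1 : 0 ≤ u*w + B := by
      rcases le_or_gt (2*w) (3 - (8*α - 3)) with h | h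
      · nlinarith [mul_nonneg hv0 hw0, mul_nonneg hu0 hw0,
          mul_nonneg hw0 (sub_nonneg.2 hu1)]
      · rcases le_or_gt (8*α - 5) u with h2 | h2
        · nlinarith [mul_nonneg (sub_nonneg.2 hw1) (by linarith : (0:ℝ) ≤ u + 2 - (8*α - 3)),
            mul_nonneg (sub_nonneg.2 hv1) (by linarith : (0:ℝ) ≤ 2*w - (3 - (8*α-3))),
            mul_nonneg hu0 hw0]
        · nlinarith [mul_nonneg hw0 (by linarith : (0:ℝ) ≤ (8*α - 3) - u - 2),
            mul_nonneg (sub_nonneg.2 hv1) (by linarith : (0:ℝ) ≤ 2*w - (3 - (8*α-3))),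
            mul_nonneg hu0 hw0]
    nlinarith [mul_nonneg (sub_nonneg.2 hy1) (neg_nonneg.2 hBneg.le),
      mul_nonneg (mul_nonneg hu0 hw0) (sub_nonneg.2 hx1),
      mul_nonneg (mul_nonneg hu0 hw0) (sub_nonneg.2 hy1)]
end

section
/- The polynomial P₃(x₁,…,x₁₀) = (1/24)(2x₂x₆x₉ + 2x₅x₈x₁₀ − x₁x₅x₈x₁₀ − x₂x₅x₈x₁₀ − x₂x₆x₈x₁₀ − x₂x₆x₉x₁₀) satisfies P₃(0, ε, 0, 0, 0, ε, 0, ε, 0, ε) = −ε⁴/24 < 0 for every ε > 0; hence P₃ takes negative values on every hypercube [0,ε]¹⁰ with ε > 0. -/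
/-- Step polynomial `P₃` of the classical RK4 method applied to upwind advection. -/
noncomputable def P3 (x1 x2 x3 x4 x5 x6 x7 x8 x9 x10 : ℝ) : ℝ :=
  (1/24) * (2*x2*x6*x9 + 2*x5*x8*x10 - x1*x5*x8*x10 - x2*x5*x8*x10
    - x2*x6*x8*x10 - x2*x6*x9*x10)

theorem rk4_P3_negative (ε : ℝ) (hε : 0 < ε) :
    P3 0 ε 0 0 0 ε 0 ε 0 ε = -ε^4/24 ∧ -ε^4/24 < 0 ∧
    (0:ℝ) ∈ Set.Icc 0 ε ∧ ε ∈ Set.Icc 0 ε := by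
  refine ⟨by simp [P3]; ring, by nlinarith [pow_pos hε 4], ⟨le_refl 0, hε.le⟩, ⟨hε.le, le_refl ε⟩⟩
end

section
/- For every α ∈ [1/2, 1] and all (x, y, z, u) ∈ [0, 1/2]⁴, the three polynomials P₋₁(x,y,z,u) = (u − y − 2α(yu + uz − y))/(2α), P₀(x,y,z,u) = (u(αx + 4αy + αz − 2) + 2(α − 2αy + y))/(2α), and P₁(x,y,z,u) = (u − y − 2α(xu + yu − y))/(2α) are all non-negative. -/
theorem heat_erk22_polys_nonneg (α : ℝ) (hα1 : 1/2 ≤ α) (hα2 : α ≤ 1)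
    (x y z u : ℝ)
    (hx : x ∈ Set.Icc (0:ℝ) (1/2)) (hy : y ∈ Set.Icc (0:ℝ) (1/2))
    (hz : z ∈ Set.Icc (0:ℝ) (1/2)) (hu : u ∈ Set.Icc (0:ℝ) (1/2)) :
    0 ≤ (u - y - 2*α*(y*u + u*z - y))/(2*α) ∧
    0 ≤ (u*(α*x + 4*α*y + α*z - 2) + 2*(α - 2*α*y + y))/(2*α) ∧
    0 ≤ (u - y - 2*α*(x*u + y*u - y))/(2*α) := by
  obtain ⟨hx0, hx1⟩ := hx
  obtain ⟨hy0, hy1⟩ := hy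
  obtain ⟨hz0, hz1⟩ := hz
  obtain ⟨hu0, hu1⟩ := hu
  have hαpos : (0:ℝ) < 2*α := by linarith
  refine ⟨div_nonneg ?_ hαpos.le, div_nonneg ?_ hαpos.le, div_nonneg ?_ hαpos.le⟩
  · rcases le_or_gt 0 (1 - 2*α*y - 2*α*z) with h | h
    · nlinarith [mul_nonneg hu0 h, mul_nonneg hy0 (by linarith : (0:ℝ) ≤ 2*α - 1)]
    · nlinarith [mul_nonneg (by linarith : (0:ℝ) ≤ 1/2 - u) (by linarith : (0:ℝ) ≤ 2*α*y + 2*α*z - 1),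
        mul_nonneg (by linarith : (0:ℝ) ≤ 1 - α) (by linarith : (0:ℝ) ≤ 1/2 - y),
        mul_nonneg (by linarith : (0:ℝ) ≤ α) (by linarith : (0:ℝ) ≤ 1/2 - z)]
  · nlinarith [mul_nonneg hu0 hx0, mul_nonneg hu0 hz0, mul_nonneg hu0 hy0,
      mul_nonneg (sub_nonneg.2 hu1) (sub_nonneg.2 hy1),
      mul_nonneg (sub_nonneg.2 hα2) hy0,
      mul_nonneg (mul_nonneg hu0 hx0) (by linarith : (0:ℝ) ≤ α),
      mul_nonneg (mul_nonneg hu0 hz0) (by linarith : (0:ℝ) ≤ α)]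
  · rcases le_or_gt 0 (1 - 2*α*x - 2*α*y) with h | h
    · nlinarith [mul_nonneg hu0 h, mul_nonneg hy0 (by linarith : (0:ℝ) ≤ 2*α - 1)]
    · nlinarith [mul_nonneg (by linarith : (0:ℝ) ≤ 1/2 - u) (by linarith : (0:ℝ) ≤ 2*α*x + 2*α*y - 1),
        mul_nonneg (by linarith : (0:ℝ) ≤ 1 - α) (by linarith : (0:ℝ) ≤ 1/2 - y),
        mul_nonneg (by linarith : (0:ℝ) ≤ α) (by linarith : (0:ℝ) ≤ 1/2 - x)]
end
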